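/- Let p be a prime, n ≥ 1, and G = Z_{p^n} ⊕ Z_{p^n}. The map H ↦ H^Δ := {p^m h : h ∈ H}, defined on cocyclic subgroups H ≅ Z_{p^n} ⊕ Z_{p^m} of G (i.e., subgroups with cyclic quotient), is a bijection between the set of cocyclic subgroups of G and the set of cyclic subgroups of G; moreover, it is order-reversing: H_1 ⊆ H_2 if and only if H_1^Δ ⊇ H_2^Δ. -/

import Mathlib

section
variable (p n : ℕ)

/-- `l(K) = log_p |K|`. -/
noncomputable def len (K : AddSubgroup (ZMod (p ^ n) × ZMod (p ^ n))) : ℕ :=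
  (Nat.card K).factorization p

/-- The multiplication-by-`pᵏ` endomorphism. -/
def pPow (k : ℕ) : (ZMod (p ^ n) × ZMod (p ^ n)) →+ (ZMod (p ^ n) × ZMod (p ^ n)) :=
  AddMonoidHom.mk' (fun x => p ^ k • x) (fun a b => smul_add _ a b)

/-- For a cocyclic subgroup `H ≅ ℤ_{pⁿ} ⊕ ℤ_{pᵐ}` (so `|H| = p^{n+m}`), `H^Δ = pᵐ H`. -/
noncomputable def deltaMap (H : AddSubgroup (ZMod (p ^ n) × ZMod (p ^ n))) :
    AddSubgroup (ZMod (p ^ n) × ZMod (p ^ n)) :=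
  H.map (pPow p n (len p n H - n))

end


/- ===== auxiliary lemmas ===== -/

open AddSubgroup

lemma zmod_div_lemma {N : ℕ} [NeZero N] (u v : ZMod N) (h : addOrderOf u • v = 0) :
    ∃ c : ZMod N, v = c * u := by
  have hN : N ≠ 0 := NeZero.ne N
  set g := N.gcd u.val with hg
  have hord : addOrderOf u = N / g := by
    conv_lhs => rw [← ZMod.natCast_rightInverse u]
    exact ZMod.addOrderOf_coe _ hN
  rw [hord, nsmul_eq_mul] at h
  have hdvd : g ∣ v.val := by
    have h2 : (((N / g) * v.val : ℕ) : ZMod N) = 0 := by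
      push_cast
      rw [ZMod.natCast_rightInverse v]
      exact h
    rw [ZMod.natCast_eq_zero_iff] at h2
    have hgN : g ∣ N := Nat.gcd_dvd_left _ _
    have : g * (N / g) ∣ (N / g) * v.val := by
      rwa [Nat.mul_div_cancel' hgN]
    rcases this with ⟨w, hw⟩
    have hNg : N / g ≠ 0 := by
      apply Nat.div_ne_zero_iff_of_dvd hgN |>.mpr
      exact ⟨hN, Nat.gcd_ne_zero_left hN⟩
    refine ⟨w, ?_⟩
    have := hw
    rw [mul_comm g (N/g), mul_assoc] at this
    exact Nat.eq_of_mul_eq_mul_left (Nat.pos_of_ne_zero hNg) this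
  have hbez : (g : ℤ) = N * Nat.gcdA N u.val + u.val * Nat.gcdB N u.val :=
    Nat.gcd_eq_gcd_ab N u.val
  have hgz : (g : ZMod N) = u * (Nat.gcdB N u.val : ZMod N) := by
    have := congrArg (fun z : ℤ => (z : ZMod N)) hbez
    push_cast at this
    rw [ZMod.natCast_self, ZMod.natCast_rightInverse u] at this
    simpa using this
  rcases hdvd with ⟨w, hw⟩
  refine ⟨(Nat.gcdB N u.val : ZMod N) * (w : ZMod N), ?_⟩
  calc v = ((v.val : ℕ) : ZMod N) := (ZMod.natCast_rightInverse v).symm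
    _ = ((g * w : ℕ) : ZMod N) := by rw [← hw]
    _ = (g : ZMod N) * w := by push_cast; ring
    _ = _ := by rw [hgz]; ring

section
variable (p n : ℕ)

def lform (a b : ZMod (p ^ n)) : (ZMod (p ^ n) × ZMod (p ^ n)) →+ ZMod (p ^ n) :=
  AddMonoidHom.mk' (fun x => a * x.1 + b * x.2) (by
    intro x y
    simp only [Prod.fst_add, Prod.snd_add, mul_add]
    ring)

lemma lform_apply (a b : ZMod (p ^ n)) (x : ZMod (p ^ n) × ZMod (p ^ n)) :
    lform p n a b x = a * x.1 + b * x.2 := rfl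

lemma prod_decomp [NeZero (p ^ n)] (x : ZMod (p ^ n) × ZMod (p ^ n)) :
    x = x.1.val • ((1 : ZMod (p ^ n)), (0 : ZMod (p ^ n)))
      + x.2.val • ((0 : ZMod (p ^ n)), (1 : ZMod (p ^ n))) := by
  ext <;> simp [nsmul_eq_mul, ZMod.natCast_rightInverse x.1, ZMod.natCast_rightInverse x.2]

lemma hom_eq_lform [NeZero (p ^ n)] (f : (ZMod (p ^ n) × ZMod (p ^ n)) →+ ZMod (p ^ n)) :
    f = lform p n (f (1, 0)) (f (0, 1)) := by
  ext x
  conv_lhs => rw [prod_decomp p n x]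
  rw [map_add, map_nsmul, map_nsmul, lform_apply, nsmul_eq_mul, nsmul_eq_mul,
    ZMod.natCast_rightInverse x.1, ZMod.natCast_rightInverse x.2]
  ring

lemma gcd_bezout [NeZero (p ^ n)] (a b : ZMod (p ^ n)) :
    ∃ α β : ZMod (p ^ n),
      (((a.val.gcd b.val).gcd (p ^ n) : ℕ) : ZMod (p ^ n)) = a * α + b * β := by
  set d := a.val.gcd b.val with hd
  have h1 : (d : ℤ) = a.val * Nat.gcdA a.val b.val + b.val * Nat.gcdB a.val b.val :=
    Nat.gcd_eq_gcd_ab a.val b.val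
  have h2 : ((d.gcd (p ^ n) : ℕ) : ℤ)
      = d * Nat.gcdA d (p ^ n) + (p : ℤ) ^ n * Nat.gcdB d (p ^ n) := by
    have := Nat.gcd_eq_gcd_ab d (p ^ n)
    push_cast at this ⊢
    exact this
  rw [h1] at h2
  refine ⟨(Nat.gcdA a.val b.val : ZMod (p ^ n)) * (Nat.gcdA d (p ^ n) : ZMod (p ^ n)),
    (Nat.gcdB a.val b.val : ZMod (p ^ n)) * (Nat.gcdA d (p ^ n) : ZMod (p ^ n)), ?_⟩
  have := congrArg (fun z : ℤ => (z : ZMod (p ^ n))) h2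
  push_cast at this
  have hp0 : ((p : ZMod (p ^ n))) ^ n = 0 := by
    rw [← Nat.cast_pow, ZMod.natCast_self]
  rw [ZMod.natCast_rightInverse a, ZMod.natCast_rightInverse b, hp0] at this
  rw [this]
  ring

lemma val_factor [NeZero (p ^ n)] (a : ZMod (p ^ n)) {g : ℕ} (hg : g ∣ a.val) :
    a = (g : ZMod (p ^ n)) * ((a.val / g : ℕ) : ZMod (p ^ n)) := by
  conv_lhs => rw [← ZMod.natCast_rightInverse a]
  rw [← Nat.cast_mul, Nat.mul_div_cancel' hg]

lemma range_lform [NeZero (p ^ n)] (a b : ZMod (p ^ n)) :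
    (lform p n a b).range
      = zmultiples ((((a.val.gcd b.val).gcd (p ^ n)) : ℕ) : ZMod (p ^ n)) := by
  set g := (a.val.gcd b.val).gcd (p ^ n) with hgdef
  have hga : g ∣ a.val := (Nat.gcd_dvd_left _ _).trans (Nat.gcd_dvd_left _ _)
  have hgb : g ∣ b.val := (Nat.gcd_dvd_left _ _).trans (Nat.gcd_dvd_right _ _)
  apply le_antisymm
  · rintro _ ⟨x, rfl⟩
    rw [lform_apply, val_factor p n a hga, val_factor p n b hgb]
    have : (g : ZMod (p ^ n)) * ((a.val / g : ℕ) : ZMod (p ^ n)) * x.1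
        + (g : ZMod (p ^ n)) * ((b.val / g : ℕ) : ZMod (p ^ n)) * x.2
        = (((a.val / g : ℕ) : ZMod (p ^ n)) * x.1
            + ((b.val / g : ℕ) : ZMod (p ^ n)) * x.2) * (g : ZMod (p ^ n)) := by ring
    rw [this]
    set c := ((a.val / g : ℕ) : ZMod (p ^ n)) * x.1 + ((b.val / g : ℕ) : ZMod (p ^ n)) * x.2
    refine ⟨(c.val : ℤ), ?_⟩
    show (c.val : ℤ) • ((g : ZMod (p ^ n))) = c * (g : ZMod (p ^ n))
    rw [zsmul_eq_mul]
    push_cast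
    rw [ZMod.natCast_rightInverse c]
  · rw [zmultiples_le]
    obtain ⟨α, β, hab⟩ := gcd_bezout p n a b
    exact ⟨(α, β), hab.symm⟩

lemma card_ker_lform [NeZero (p ^ n)] (a b : ZMod (p ^ n)) :
    Nat.card (lform p n a b).ker = p ^ n * (a.val.gcd b.val).gcd (p ^ n) := by
  set g := (a.val.gcd b.val).gcd (p ^ n) with hgdef
  have hgN : g ∣ p ^ n := Nat.gcd_dvd_right _ _
  have hNpos : p ^ n ≠ 0 := NeZero.ne _
  have hgpos : 0 < g :=
    Nat.pos_of_ne_zero fun h => hNpos (Nat.eq_zero_of_zero_dvd (h ▸ hgN))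
  have hcardG : Nat.card (ZMod (p ^ n) × ZMod (p ^ n)) = p ^ n * p ^ n := by
    rw [Nat.card_prod, Nat.card_zmod]
  have hquot : Nat.card ((ZMod (p ^ n) × ZMod (p ^ n)) ⧸ (lform p n a b).ker)
      = p ^ n / g := by
    rw [Nat.card_congr (QuotientAddGroup.quotientKerEquivRange (lform p n a b)).toEquiv,
      range_lform, Nat.card_zmultiples, ZMod.addOrderOf_coe _ hNpos,
      Nat.gcd_eq_right hgN]
  have key := AddSubgroup.card_eq_card_quotient_mul_card_addSubgroup (lform p n a b).ker
  rw [hcardG, hquot] at key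
  have hdiv : p ^ n / g * (p ^ n * g) = p ^ n * p ^ n := by
    rw [mul_comm (p ^ n) g, ← mul_assoc, Nat.div_mul_cancel hgN]
  have hq : 0 < p ^ n / g := Nat.div_pos (Nat.le_of_dvd (Nat.pos_of_ne_zero hNpos) hgN) hgpos
  exact (Nat.eq_of_mul_eq_mul_left hq (by rw [← key, hdiv])).symm

end


section
variable (p n : ℕ)

lemma pPow_apply (k : ℕ) (x : ZMod (p ^ n) × ZMod (p ^ n)) :
    pPow p n k x = (((p ^ k : ℕ) : ZMod (p ^ n)) * x.1, ((p ^ k : ℕ) : ZMod (p ^ n)) * x.2) := by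
  show (p ^ k) • x = _
  ext <;> simp [nsmul_eq_mul]

/-- The key computation: the delta map sends `ker (a·x + b·y)` to `⟨(b, -a)⟩`. -/
lemma delta_ker (hp : p.Prime) (a b : ZMod (p ^ n)) :
    deltaMap p n (lform p n a b).ker
      = zmultiples ((b, -a) : ZMod (p ^ n) × ZMod (p ^ n)) := by
  haveI : NeZero (p ^ n) := ⟨pow_ne_zero n hp.pos.ne'⟩
  obtain ⟨α, β, hbez⟩ := gcd_bezout p n a b
  have hga : (a.val.gcd b.val).gcd (p ^ n) ∣ a.val :=
    (Nat.gcd_dvd_left _ _).trans (Nat.gcd_dvd_left _ _)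
  have hgb : (a.val.gcd b.val).gcd (p ^ n) ∣ b.val :=
    (Nat.gcd_dvd_left _ _).trans (Nat.gcd_dvd_right _ _)
  have hgN : (a.val.gcd b.val).gcd (p ^ n) ∣ p ^ n := Nat.gcd_dvd_right _ _
  have ha : a = (((a.val.gcd b.val).gcd (p ^ n) : ℕ) : ZMod (p ^ n))
      * ((a.val / (a.val.gcd b.val).gcd (p ^ n) : ℕ) : ZMod (p ^ n)) := val_factor p n a hga
  have hb : b = (((a.val.gcd b.val).gcd (p ^ n) : ℕ) : ZMod (p ^ n))
      * ((b.val / (a.val.gcd b.val).gcd (p ^ n) : ℕ) : ZMod (p ^ n)) := val_factor p n b hgb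
  have hkercard : Nat.card (lform p n a b).ker = p ^ n * (a.val.gcd b.val).gcd (p ^ n) :=
    card_ker_lform p n a b
  set a' := ((a.val / (a.val.gcd b.val).gcd (p ^ n) : ℕ) : ZMod (p ^ n)) with ha'
  set b' := ((b.val / (a.val.gcd b.val).gcd (p ^ n) : ℕ) : ZMod (p ^ n)) with hb'
  clear_value a' b'
  set g := (a.val.gcd b.val).gcd (p ^ n) with hgdef
  clear_value g
  -- now `g` is opaque, with all needed facts recorded
  obtain ⟨j, hjn, hgp⟩ := (Nat.dvd_prime_pow hp).mp hgN
  have hlen : len p n (lform p n a b).ker - n = j := by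
    have : len p n (lform p n a b).ker = n + j := by
      rw [len, hkercard, hgp, ← pow_add, hp.factorization_pow, Finsupp.single_eq_same]
    omega
  rw [deltaMap, hlen]
  apply le_antisymm
  · rintro _ ⟨⟨x, y⟩, hker, rfl⟩
    have hker' : a * x + b * y = 0 := hker
    rw [pPow_apply, ← hgp]
    rcases eq_or_lt_of_le hjn with hj | hj
    · -- j = n : everything is killed
      have hg0 : ((g : ℕ) : ZMod (p ^ n)) = 0 := by
        rw [hgp, hj, ZMod.natCast_self]
      rw [hg0]
      simp only [zero_mul]
      exact zero_mem _
    · -- j < n : the unit trick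
      have hgu : (g : ZMod (p ^ n)) * (a' * α + b' * β) = (g : ZMod (p ^ n)) := by
        linear_combination (-α) * ha + (-β) * hb - hbez
      have hpnil : ∀ m, n ≤ m → ((p : ZMod (p ^ n))) ^ m = 0 := by
        intro m hm
        have hpn : ((p : ZMod (p ^ n))) ^ n = 0 := by
          rw [← Nat.cast_pow, ZMod.natCast_self]
        calc ((p : ZMod (p ^ n))) ^ m
            = ((p : ZMod (p ^ n))) ^ n * ((p : ZMod (p ^ n))) ^ (m - n) := by
              rw [← pow_add]; congr 1; omega
          _ = 0 := by rw [hpn, zero_mul]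
      have hnil : IsNilpotent ((a' * α + b' * β) - 1) := by
        have h1 : ((g : ZMod (p ^ n))) * ((a' * α + b' * β) - 1) = 0 := by
          rw [mul_sub, hgu, mul_one, sub_self]
        have h2 : (((g * ((a' * α + b' * β) - 1).val : ℕ) : ZMod (p ^ n))) = 0 := by
          push_cast
          rw [ZMod.natCast_rightInverse]
          exact h1
        rw [ZMod.natCast_eq_zero_iff] at h2
        have hdvd : p ^ (n - j) ∣ ((a' * α + b' * β) - 1).val := by
          rcases h2 with ⟨t, ht⟩
          rw [hgp] at ht
          have heq : p ^ j * ((a' * α + b' * β) - 1).val = p ^ j * (p ^ (n - j) * t) := by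
            rw [ht, ← mul_assoc, ← pow_add]
            congr 2
            omega
          have hppos : 0 < p ^ j := Nat.pow_pos hp.pos
          exact ⟨t, Nat.eq_of_mul_eq_mul_left hppos heq⟩
        have hfac : ((a' * α + b' * β) - 1)
            = ((p : ZMod (p ^ n)) ^ (n - j))
              * (((((a' * α + b' * β) - 1).val / p ^ (n - j) : ℕ)) : ZMod (p ^ n)) := by
          conv_lhs => rw [val_factor p n ((a' * α + b' * β) - 1) hdvd]
          rw [Nat.cast_pow]
        rw [hfac]
        apply Commute.isNilpotent_mul_right (Commute.all _ _)
        refine ⟨n, ?_⟩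
        rw [← pow_mul]
        exact hpnil ((n - j) * n) (Nat.le_mul_of_pos_left n (by omega))
      have hunit : IsUnit (a' * α + b' * β) := by
        have h := hnil.isUnit_one_add
        rwa [show (1 : ZMod (p ^ n)) + ((a' * α + b' * β) - 1) = a' * α + b' * β by ring] at h
      obtain ⟨v, hv⟩ := hunit.exists_right_inv
      have key1 : (v * (β * x - α * y)) * b = (g : ZMod (p ^ n)) * x := by
        have e1 : (β * x - α * y) * b = (a' * α + b' * β) * ((g : ZMod (p ^ n)) * x) := by
          linear_combination α * x * ha + β * x * hb - α * hker'
        calc (v * (β * x - α * y)) * b = v * ((β * x - α * y) * b) := by ring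
          _ = v * ((a' * α + b' * β) * ((g : ZMod (p ^ n)) * x)) := by rw [e1]
          _ = ((a' * α + b' * β) * v) * ((g : ZMod (p ^ n)) * x) := by ring
          _ = (g : ZMod (p ^ n)) * x := by rw [hv, one_mul]
      have key2 : (v * (β * x - α * y)) * (-a) = (g : ZMod (p ^ n)) * y := by
        have e2 : (β * x - α * y) * (-a) = (a' * α + b' * β) * ((g : ZMod (p ^ n)) * y) := by
          linear_combination α * y * ha + β * y * hb - β * hker'
        calc (v * (β * x - α * y)) * (-a) = v * ((β * x - α * y) * (-a)) := by ring
          _ = v * ((a' * α + b' * β) * ((g : ZMod (p ^ n)) * y)) := by rw [e2]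
          _ = ((a' * α + b' * β) * v) * ((g : ZMod (p ^ n)) * y) := by ring
          _ = (g : ZMod (p ^ n)) * y := by rw [hv, one_mul]
      refine ⟨(((v * (β * x - α * y)).val : ℤ)), ?_⟩
      show (((v * (β * x - α * y)).val : ℤ)) • ((b, -a) : ZMod (p ^ n) × ZMod (p ^ n)) = _
      have hcv : ((((v * (β * x - α * y)).val : ℤ)) : ZMod (p ^ n)) = v * (β * x - α * y) := by
        push_cast
        exact ZMod.natCast_rightInverse _
      ext
      · show (((v * (β * x - α * y)).val : ℤ)) • b = (g : ZMod (p ^ n)) * x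
        rw [zsmul_eq_mul, hcv, key1]
      · show (((v * (β * x - α * y)).val : ℤ)) • (-a) = (g : ZMod (p ^ n)) * y
        rw [zsmul_eq_mul, hcv, key2]
  · rw [zmultiples_le]
    refine ⟨(b', -a'), ?_, ?_⟩
    · show a * b' + b * (-a') = 0
      linear_combination b' * ha - a' * hb
    · rw [pPow_apply, ← hgp]
      ext
      · show ((g : ℕ) : ZMod (p ^ n)) * b' = b
        rw [hb]
      · show ((g : ℕ) : ZMod (p ^ n)) * (-a') = -a
        rw [ha]
        ring

/-- Every cocyclic subgroup is the kernel of a linear form. -/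
lemma exists_lform_of_cocyclic (hp : p.Prime) (H : AddSubgroup (ZMod (p ^ n) × ZMod (p ^ n)))
    (hH : IsAddCyclic ((ZMod (p ^ n) × ZMod (p ^ n)) ⧸ H)) :
    ∃ a b, H = (lform p n a b).ker := by
  haveI : NeZero (p ^ n) := ⟨pow_ne_zero n hp.pos.ne'⟩
  haveI : Finite ((ZMod (p ^ n) × ZMod (p ^ n)) ⧸ H) :=
    Finite.of_surjective _ (QuotientAddGroup.mk'_surjective H)
  set k := Nat.card ((ZMod (p ^ n) × ZMod (p ^ n)) ⧸ H) with hkdef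
  have hk0 : k ≠ 0 := Nat.card_pos.ne'
  haveI : NeZero k := ⟨hk0⟩
  -- every element of the quotient is killed by p^n
  have hkillG : ∀ x : ZMod (p ^ n) × ZMod (p ^ n), (p ^ n) • x = 0 := by
    intro x
    have h1 : pPow p n n x = 0 := by
      rw [pPow_apply, ZMod.natCast_self]
      ext <;> simp
    exact h1
  have hkill : ∀ q : (ZMod (p ^ n) × ZMod (p ^ n)) ⧸ H, (p ^ n) • q = 0 := by
    intro q
    obtain ⟨x, rfl⟩ := QuotientAddGroup.mk'_surjective H q
    rw [← map_nsmul, hkillG, map_zero]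
  -- the isomorphism with ZMod k
  let e : ZMod k ≃+ ((ZMod (p ^ n) × ZMod (p ^ n)) ⧸ H) := zmodAddCyclicAddEquiv hH
  have hkdvd : k ∣ p ^ n := by
    have h1 : e ((p ^ n) • (1 : ZMod k)) = 0 := by
      rw [map_nsmul]
      exact hkill _
    rw [← map_zero e] at h1
    have h2 := e.injective h1
    rw [nsmul_eq_mul, mul_one] at h2
    exact (ZMod.natCast_eq_zero_iff _ _).mp h2
  have hndvd : p ^ n = k * (p ^ n / k) := (Nat.mul_div_cancel' hkdvd).symm
  have hquotk : p ^ n / k ≠ 0 := by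
    intro h
    rw [h, mul_zero] at hndvd
    exact (pow_ne_zero n hp.pos.ne') hndvd
  -- embedding ZMod k into ZMod (p^n)
  have hcond : (zmultiplesHom (ZMod (p ^ n)) (((p ^ n / k : ℕ) : ZMod (p ^ n)))) (k : ℤ) = 0 := by
    show (k : ℤ) • (((p ^ n / k : ℕ) : ZMod (p ^ n))) = 0
    rw [zsmul_eq_mul]
    push_cast
    rw [← Nat.cast_mul, ← hndvd, ZMod.natCast_self]
  let emb : ZMod k →+ ZMod (p ^ n) :=
    ZMod.lift k ⟨zmultiplesHom (ZMod (p ^ n)) (((p ^ n / k : ℕ) : ZMod (p ^ n))), hcond⟩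
  have hembinj : ∀ x : ZMod k, emb x = 0 → x = 0 := by
    intro x hx
    have hxval : ((x.val : ℤ) : ZMod k) = x := by
      push_cast
      exact ZMod.natCast_rightInverse x
    have h1 : emb (((x.val : ℤ) : ZMod k)) = (x.val : ℤ) • (((p ^ n / k : ℕ) : ZMod (p ^ n))) :=
      ZMod.lift_coe _ _ _
    rw [hxval, hx] at h1
    have h1' : ((x.val : ℤ) : ZMod (p ^ n)) * (((p ^ n / k : ℕ)) : ZMod (p ^ n)) = 0 := by
      rw [← zsmul_eq_mul]
      exact h1.symm
    have h2 : ((x.val * (p ^ n / k) : ℕ) : ZMod (p ^ n)) = 0 := by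
      push_cast
      push_cast at h1'
      exact h1'
    rw [ZMod.natCast_eq_zero_iff] at h2
    have h3 : k * (p ^ n / k) ∣ x.val * (p ^ n / k) := by rw [← hndvd]; exact h2
    have h4 : k ∣ x.val := by
      rcases h3 with ⟨t, ht⟩
      refine ⟨t, ?_⟩
      have := ht
      rw [mul_comm x.val (p ^ n / k), mul_comm k (p ^ n / k), mul_assoc] at this
      exact Nat.eq_of_mul_eq_mul_left (Nat.pos_of_ne_zero hquotk) this
    have h5 : x.val = 0 := Nat.eq_zero_of_dvd_of_lt h4 (ZMod.val_lt x)
    exact (ZMod.val_eq_zero x).mp h5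
  -- the composite hom
  set f : (ZMod (p ^ n) × ZMod (p ^ n)) →+ ZMod (p ^ n) :=
    emb.comp ((e.symm : _ ≃+ ZMod k).toAddMonoidHom.comp (QuotientAddGroup.mk' H)) with hfdef
  have hfker : f.ker = H := by
    ext x
    simp only [hfdef, AddMonoidHom.mem_ker, AddMonoidHom.coe_comp, Function.comp_apply]
    constructor
    · intro hx
      have h1 := hembinj _ hx
      have h2 : (QuotientAddGroup.mk' H) x = 0 := by
        have := congrArg e h1
        rwa [AddEquiv.coe_toAddMonoidHom, AddEquiv.apply_symm_apply, map_zero] at this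
      exact (QuotientAddGroup.eq_zero_iff x).mp h2
    · intro hx
      have h1 : (QuotientAddGroup.mk' H) x = 0 := (QuotientAddGroup.eq_zero_iff x).mpr hx
      rw [h1, map_zero, map_zero]
  refine ⟨f (1, 0), f (0, 1), ?_⟩
  rw [← hom_eq_lform p n f, hfker]

/-- Comparison of kernels of linear forms. -/
lemma ker_le_ker_iff (hp : p.Prime) (a₁ b₁ a₂ b₂ : ZMod (p ^ n)) :
    (lform p n a₁ b₁).ker ≤ (lform p n a₂ b₂).ker
      ↔ ∃ c, a₂ = c * a₁ ∧ b₂ = c * b₁ := by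
  haveI : NeZero (p ^ n) := ⟨pow_ne_zero n hp.pos.ne'⟩
  constructor
  · intro hle
    obtain ⟨α, β, hbez⟩ := gcd_bezout p n a₁ b₁
    have hga : (a₁.val.gcd b₁.val).gcd (p ^ n) ∣ a₁.val :=
      (Nat.gcd_dvd_left _ _).trans (Nat.gcd_dvd_left _ _)
    have hgb : (a₁.val.gcd b₁.val).gcd (p ^ n) ∣ b₁.val :=
      (Nat.gcd_dvd_left _ _).trans (Nat.gcd_dvd_right _ _)
    have ha : a₁ = (((a₁.val.gcd b₁.val).gcd (p ^ n) : ℕ) : ZMod (p ^ n))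
        * ((a₁.val / (a₁.val.gcd b₁.val).gcd (p ^ n) : ℕ) : ZMod (p ^ n)) := val_factor p n a₁ hga
    have hb : b₁ = (((a₁.val.gcd b₁.val).gcd (p ^ n) : ℕ) : ZMod (p ^ n))
        * ((b₁.val / (a₁.val.gcd b₁.val).gcd (p ^ n) : ℕ) : ZMod (p ^ n)) := val_factor p n b₁ hgb
    set a' := ((a₁.val / (a₁.val.gcd b₁.val).gcd (p ^ n) : ℕ) : ZMod (p ^ n)) with ha'
    set b' := ((b₁.val / (a₁.val.gcd b₁.val).gcd (p ^ n) : ℕ) : ZMod (p ^ n)) with hb'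
    clear_value a' b'
    set g := (a₁.val.gcd b₁.val).gcd (p ^ n) with hgdef
    clear_value g
    -- the generator of the image
    have hx₀ : lform p n a₁ b₁ (α, β) = ((g : ℕ) : ZMod (p ^ n)) := by
      rw [lform_apply]
      exact hbez.symm
    have hmem : addOrderOf ((g : ℕ) : ZMod (p ^ n)) • ((α, β) : ZMod (p ^ n) × ZMod (p ^ n))
        ∈ (lform p n a₁ b₁).ker := by
      rw [AddMonoidHom.mem_ker, map_nsmul, hx₀, addOrderOf_nsmul_eq_zero]
    have h0 := hle hmem
    rw [AddMonoidHom.mem_ker, map_nsmul] at h0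
    obtain ⟨c, hc⟩ := zmod_div_lemma _ _ h0
    rw [lform_apply] at hc
    refine ⟨c, ?_, ?_⟩
    · -- a₂ = c * a₁
      have hy₁ : ((1 - a' * α, -(a' * β)) : ZMod (p ^ n) × ZMod (p ^ n))
          ∈ (lform p n a₁ b₁).ker := by
        rw [AddMonoidHom.mem_ker, lform_apply]
        linear_combination ha + a' * hbez
      have h2 := hle hy₁
      rw [AddMonoidHom.mem_ker, lform_apply] at h2
      linear_combination h2 + a' * hc - c * ha
    · -- b₂ = c * b₁
      have hy₂ : ((-(b' * α), 1 - b' * β) : ZMod (p ^ n) × ZMod (p ^ n))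
          ∈ (lform p n a₁ b₁).ker := by
        rw [AddMonoidHom.mem_ker, lform_apply]
        linear_combination hb + b' * hbez
      have h2 := hle hy₂
      rw [AddMonoidHom.mem_ker, lform_apply] at h2
      linear_combination h2 + b' * hc - c * hb
  · rintro ⟨c, rfl, rfl⟩ x hx
    rw [AddMonoidHom.mem_ker, lform_apply] at hx ⊢
    linear_combination c * hx

/-- Comparison of the corresponding cyclic subgroups. -/
lemma zmult_le_iff [NeZero (p ^ n)] (a₁ b₁ a₂ b₂ : ZMod (p ^ n)) :
    zmultiples ((b₂, -a₂) : ZMod (p ^ n) × ZMod (p ^ n))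
        ≤ zmultiples ((b₁, -a₁) : ZMod (p ^ n) × ZMod (p ^ n))
      ↔ ∃ c, a₂ = c * a₁ ∧ b₂ = c * b₁ := by
  constructor
  · intro h
    obtain ⟨k, hk⟩ := h (mem_zmultiples ((b₂, -a₂) : ZMod (p ^ n) × ZMod (p ^ n)))
    refine ⟨((k : ℤ) : ZMod (p ^ n)), ?_, ?_⟩
    · have h2 := congrArg Prod.snd hk
      have h2' : k • (-a₁) = -a₂ := h2
      rw [zsmul_eq_mul] at h2'
      linear_combination h2'
    · have h1 := congrArg Prod.fst hk
      have h1' : k • b₁ = b₂ := h1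
      rw [zsmul_eq_mul] at h1'
      linear_combination -h1'
  · rintro ⟨c, hc1, hc2⟩
    rw [zmultiples_le]
    refine ⟨(c.val : ℤ), ?_⟩
    have hcv : ((c.val : ℤ) : ZMod (p ^ n)) = c := by
      push_cast
      exact ZMod.natCast_rightInverse c
    ext
    · show (c.val : ℤ) • b₁ = b₂
      rw [zsmul_eq_mul, hcv, hc2]
    · show (c.val : ℤ) • (-a₁) = -a₂
      rw [zsmul_eq_mul, hcv, hc1]
      ring

end


/-- `H ↦ H^Δ = pᵐ H` is a bijection from the set of cocyclic subgroups of
`G = ℤ_{pⁿ} ⊕ ℤ_{pⁿ}` onto the set of cyclic subgroups of `G`, and it is order-reversing: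
`H₁ ⊆ H₂ ↔ H₁^Δ ⊇ H₂^Δ`. -/
theorem stmt_8 (p : ℕ) (hp : p.Prime) (n : ℕ) (hn : 1 ≤ n) :
    Set.BijOn (deltaMap p n)
      {H : AddSubgroup (ZMod (p ^ n) × ZMod (p ^ n)) |
        IsAddCyclic ((ZMod (p ^ n) × ZMod (p ^ n)) ⧸ H)}
      {F : AddSubgroup (ZMod (p ^ n) × ZMod (p ^ n)) |
        ∃ x, F = AddSubgroup.zmultiples x} ∧
    ∀ H₁ H₂ : AddSubgroup (ZMod (p ^ n) × ZMod (p ^ n)),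
      IsAddCyclic ((ZMod (p ^ n) × ZMod (p ^ n)) ⧸ H₁) →
      IsAddCyclic ((ZMod (p ^ n) × ZMod (p ^ n)) ⧸ H₂) →
      (H₁ ≤ H₂ ↔ deltaMap p n H₂ ≤ deltaMap p n H₁) := by
  haveI : NeZero (p ^ n) := ⟨pow_ne_zero n hp.pos.ne'⟩
  have orderRev : ∀ H₁ H₂ : AddSubgroup (ZMod (p ^ n) × ZMod (p ^ n)),
      IsAddCyclic ((ZMod (p ^ n) × ZMod (p ^ n)) ⧸ H₁) →
      IsAddCyclic ((ZMod (p ^ n) × ZMod (p ^ n)) ⧸ H₂) →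
      (H₁ ≤ H₂ ↔ deltaMap p n H₂ ≤ deltaMap p n H₁) := by
    intro H₁ H₂ h₁ h₂
    obtain ⟨a₁, b₁, rfl⟩ := exists_lform_of_cocyclic p n hp H₁ h₁
    obtain ⟨a₂, b₂, rfl⟩ := exists_lform_of_cocyclic p n hp H₂ h₂
    rw [delta_ker p n hp, delta_ker p n hp, ker_le_ker_iff p n hp, zmult_le_iff p n]
  refine ⟨⟨?_, ?_, ?_⟩, orderRev⟩
  · -- MapsTo
    intro H hH
    obtain ⟨a, b, rfl⟩ := exists_lform_of_cocyclic p n hp H hH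
    exact ⟨(b, -a), (delta_ker p n hp a b)⟩
  · -- InjOn
    intro H₁ h₁ H₂ h₂ heq
    exact le_antisymm ((orderRev H₁ H₂ h₁ h₂).mpr (le_of_eq heq.symm))
      ((orderRev H₂ H₁ h₂ h₁).mpr (le_of_eq heq))
  · -- SurjOn
    rintro F ⟨x, rfl⟩
    refine ⟨(lform p n (-x.2) x.1).ker, ?_, ?_⟩
    · show IsAddCyclic _
      exact isAddCyclic_of_surjective
        (QuotientAddGroup.quotientKerEquivRange (lform p n (-x.2) x.1)).symm
        (QuotientAddGroup.quotientKerEquivRange (lform p n (-x.2) x.1)).symm.surjective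
    · rw [delta_ker p n hp, neg_neg, Prod.mk.eta]
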